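/- arXiv:2011.09866 — 3 statements merged into one kernel-verified Lean document; each statement's English description precedes it below -/
import Mathlib

section
/- There exists a class ℒ of recursive languages such that ℒ ∈ [τ(CInd)TxtPsdEx_C]_REC but ℒ ∉ [TxtSdBc_W]_REC; that is, some partial computable partially set-driven learner that outputs only C-indices on all inputs Ex_C-learns every member of ℒ, but no partial computable set-driven learner Bc_W-learns every member of ℒ. -/
namespace InductiveInference

/-- `φ_e` : the `e`-th partial computable function, via the standard numbering
of `Nat.Partrec.Code`. -/
def phi (e : ℕ) : ℕ →. ℕ := (Denumerable.ofNat Nat.Partrec.Code e).eval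

/-- `W_e` : the domain of `φ_e`. -/
def Wset (e : ℕ) : Set ℕ := (phi e).Dom

/-- `e` is a C-index: `φ_e` is total with values in `{0,1}`. -/
def CIndex (e : ℕ) : Prop := ∀ x, phi e x = Part.some 0 ∨ phi e x = Part.some 1

/-- `C_e = {x | φ_e x = 1}`. -/
def Cset (e : ℕ) : Set ℕ := {x | phi e x = Part.some 1}

/-- A language is recursive (decidable). -/
def RecLang (L : Set ℕ) : Prop := ∃ f : ℕ → Bool, Computable f ∧ ∀ x, x ∈ L ↔ f x = true

/-- Texts: total functions `ℕ → ℕ ∪ {#}`; `none` is the pause symbol `#`. -/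
abbrev Text := ℕ → Option ℕ

/-- The content of a text: its range minus the pause symbol. -/
def content (T : Text) : Set ℕ := {x | ∃ n, T n = some x}

/-- The initial segment `T[n] = (T 0, …, T (n-1))`. -/
def initSeg (T : Text) (n : ℕ) : List (Option ℕ) := (List.range n).map T

/-- The (finite) content of the initial segment `T[n]`. -/
def fincontent (T : Text) (n : ℕ) : Finset ℕ := ((initSeg T n).filterMap id).toFinset

/-- A canonical numerical code for a finite set of naturals. -/
def setCode (D : Finset ℕ) : ℕ := Encodable.encode (D.sort (· ≤ ·))

/-- Learners: partial functions on (suitably coded) natural number inputs. -/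
abbrev Learner := ℕ →. ℕ

/-- The learner is partial computable. -/
def PartComputable (h : Learner) : Prop := Nat.Partrec h

/-- The learner is total computable. -/
def TotalComputable (h : Learner) : Prop := Nat.Partrec h ∧ ∀ x, (h x).Dom

/-- Hypothesis sequences (possibly undefined at some points). -/
abbrev HypSeq := ℕ → Part ℕ

/-- Gold-style (full-information) learning: `G(h,T)(i) = h(T[i])`. -/
def Gop (h : Learner) (T : Text) (i : ℕ) : Part ℕ :=
  h (Encodable.encode (initSeg T i))

/-- Partially set-driven learning: `Psd(h,T)(i) = h(content T[i], i)`. -/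
def Psdop (h : Learner) (T : Text) (i : ℕ) : Part ℕ :=
  h (Nat.pair (setCode (fincontent T i)) i)

/-- Set-driven learning: `Sd(h,T)(i) = h(content T[i])`. -/
def Sdop (h : Learner) (T : Text) (i : ℕ) : Part ℕ :=
  h (setCode (fincontent T i))

/-- Iterative learning: the input `none` codes the empty start sequence `ε`,
and `some (e, x)` codes the pair of previous hypothesis `e` and datum `x`. -/
def Itop (h : Learner) (T : Text) : ℕ → Part ℕ
  | 0 => h (Encodable.encode (none : Option (ℕ × Option ℕ)))
  | i + 1 => (Itop h T i).bind fun e =>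
      h (Encodable.encode (some (e, T i) : Option (ℕ × Option ℕ)))

/-- Transductive learning: the learner receives the single (coded) datum
`T i`; the output `0` codes the distinguished symbol `?`, and the output
`e + 1` codes the hypothesis `e`.  The value `?` of the hypothesis sequence
is represented by `Part.none`. -/
def Tdop (h : Learner) (T : Text) : ℕ → Part ℕ
  | 0 => Part.none
  | i + 1 => (h (Encodable.encode (T i))).bind fun v =>
      match v with
      | 0 => Tdop h T i
      | e + 1 => Part.some e

/-- `Ex_C`: syntactic convergence to a single correct C-index. -/
def ExC (p : HypSeq) (T : Text) : Prop :=
  ∃ n₀, (∀ n, n₀ ≤ n → p n = p n₀) ∧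
    ∃ e, p n₀ = Part.some e ∧ CIndex e ∧ Cset e = content T

/-- `Ex_W`: syntactic convergence to a single correct W-index. -/
def ExW (p : HypSeq) (T : Text) : Prop :=
  ∃ n₀, (∀ n, n₀ ≤ n → p n = p n₀) ∧
    ∃ e, p n₀ = Part.some e ∧ Wset e = content T

/-- `Bc_C`: semantic convergence to correct C-indices. -/
def BcC (p : HypSeq) (T : Text) : Prop :=
  ∃ n₀, ∀ n, n₀ ≤ n → ∃ e, p n = Part.some e ∧ CIndex e ∧ Cset e = content T

/-- `Bc_W`: semantic convergence to correct W-indices. -/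
def BcW (p : HypSeq) (T : Text) : Prop :=
  ∃ n₀, ∀ n, n₀ ≤ n → ∃ e, p n = Part.some e ∧ Wset e = content T

/-- `CInd`: every hypothesis output is a C-index. -/
def CIndRes (p : HypSeq) (_T : Text) : Prop :=
  ∀ i e, p i = Part.some e → CIndex e

/-- `T`: the always-true restriction. -/
def TrueRes (_p : HypSeq) (_T : Text) : Prop := True

abbrev InteractionOp := Learner → Text → HypSeq
abbrev Restriction := HypSeq → Text → Prop

/-- Conjunction of restrictions. -/
def andRes (δ δ' : Restriction) : Restriction := fun p T => δ p T ∧ δ' p T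

/-- `h` `Txtβδ`-learns `L`: on every text for `L` the restriction `δ` holds. -/
def Learns (β : InteractionOp) (δ : Restriction) (h : Learner) (L : Set ℕ) : Prop :=
  ∀ T : Text, content T = L → δ (β h T) T

/-- The restriction `α` holds for `h` on all texts whatsoever. -/
def OnAllTexts (β : InteractionOp) (α : Restriction) (h : Learner) : Prop :=
  ∀ T : Text, α (β h T) T

/-- A class of recursive languages. -/
def IsRecClass (ℒ : Set (Set ℕ)) : Prop := ∀ L ∈ ℒ, RecLang L

/-- `[𝒞Txtβδ]_REC`: classes of recursive languages learnable by some
learner from `C` under interaction operator `β` and restriction `δ`. -/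
def LearnableREC (C : Learner → Prop) (β : InteractionOp) (δ : Restriction) :
    Set (Set (Set ℕ)) :=
  {ℒ | IsRecClass ℒ ∧ ∃ h, C h ∧ ∀ L ∈ ℒ, Learns β δ h L}

/-- `[τ(α)𝒞Txtβδ]_REC`: as above, where additionally `α` must hold on
arbitrary texts. -/
def TauLearnableREC (C : Learner → Prop) (α : Restriction) (β : InteractionOp)
    (δ : Restriction) : Set (Set (Set ℕ)) :=
  {ℒ | IsRecClass ℒ ∧ ∃ h, C h ∧ OnAllTexts β α h ∧ ∀ L ∈ ℒ, Learns β δ h L}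


/-! ### Auxiliary construction -/

section Separation

open Nat.Partrec (Code)
open Nat.Partrec.Code

/-- The `e`-th column of `ℕ`. -/
def col (e : ℕ) : Set ℕ := {m | m.unpair.1 = e}

/-- The finite initial segment `{⟨e,0⟩, …, ⟨e,s⟩}` of column `e`. -/
def Dset (e s : ℕ) : Finset ℕ := (Finset.range (s + 1)).image fun x => Nat.pair e x

/-- The same set as a sorted list. -/
def dlist (e s : ℕ) : List ℕ := (List.range (s + 1)).map fun x => Nat.pair e x

lemma mem_Dset {e s m : ℕ} : m ∈ Dset e s ↔ m.unpair.1 = e ∧ m.unpair.2 ≤ s := by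
  constructor
  · rintro hm
    rcases Finset.mem_image.1 hm with ⟨x, hx, rfl⟩
    simp [Nat.unpair_pair, Nat.lt_succ_iff.1 (Finset.mem_range.1 hx)]
  · rintro ⟨h1, h2⟩
    refine Finset.mem_image.2 ⟨m.unpair.2, Finset.mem_range.2 (Nat.lt_succ_of_le h2), ?_⟩
    rw [← h1, Nat.pair_unpair]

lemma pair_mem_Dset {e s x : ℕ} : Nat.pair e x ∈ Dset e s ↔ x ≤ s := by
  simp [mem_Dset, Nat.unpair_pair]

lemma Dset_nonempty (e s : ℕ) : (Dset e s).Nonempty :=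
  ⟨Nat.pair e 0, pair_mem_Dset.2 (Nat.zero_le _)⟩

lemma dlist_sorted (e s : ℕ) : (dlist e s).Pairwise (· ≤ ·) := by
  refine List.Pairwise.map _ (fun a b h => ?_) (List.pairwise_lt_range (n := s + 1))
  exact le_of_lt (Nat.pair_lt_pair_right e h)

lemma dlist_nodup (e s : ℕ) : (dlist e s).Nodup := by
  refine List.Nodup.map ?_ List.nodup_range
  intro a b hab
  simpa using congrArg (fun m => m.unpair.2) hab

lemma dlist_toFinset (e s : ℕ) : (dlist e s).toFinset = Dset e s := by
  ext m
  simp [dlist, Dset, List.mem_map, Finset.mem_image, Nat.lt_succ_iff]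

lemma setCode_Dset (e s : ℕ) : setCode (Dset e s) = Encodable.encode (dlist e s) := by
  unfold setCode
  congr 1
  rw [← dlist_toFinset e s]
  exact (List.toFinset_sort (· ≤ ·) (dlist_nodup e s)).2 (dlist_sorted e s)

/-- The diagonalization predicate : on input (the code of) `Dset e s`, the
learner `φ_e` halts with an output whose `W`-set contains an element outside
`Dset e s`. -/
def Gpred (e s : ℕ) : Prop :=
  ∃ p, phi e (setCode (Dset e s)) = Part.some p ∧ ∃ y, y ∉ Dset e s ∧ y ∈ Wset p

/-- The separating class. -/
def LL : Set (Set ℕ) :=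
  {L | ∃ e, ((∃ s, Gpred e s) ∧ L = ↑(Dset e (sInf {s | Gpred e s}))) ∨
        ((∀ s, ¬ Gpred e s) ∧ L = col e)}

lemma phi_encode (c : Code) : phi (Encodable.encode c) = c.eval := by
  unfold phi; rw [Denumerable.ofNat_encode]

/-! #### The two uniform families of C-indices -/

def f1 : ℕ → ℕ := fun n => if n.unpair.2.unpair.1 = n.unpair.1 then 1 else 0

def f2 : ℕ → ℕ := fun n =>
  if n.unpair.2.unpair.1 = n.unpair.1.unpair.1 ∧ n.unpair.2.unpair.2 ≤ n.unpair.1.unpair.2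
  then 1 else 0

lemma primrec_f1 : Primrec f1 := by
  unfold f1
  exact Primrec.ite
    (PrimrecRel.comp Primrec.eq
      (Primrec.fst.comp (Primrec.unpair.comp (Primrec.snd.comp Primrec.unpair)))
      (Primrec.fst.comp Primrec.unpair))
    (Primrec.const 1) (Primrec.const 0)

lemma primrec_f2 : Primrec f2 := by
  unfold f2
  have u1 : Primrec fun n : ℕ => n.unpair.1 := Primrec.fst.comp Primrec.unpair
  have u2 : Primrec fun n : ℕ => n.unpair.2 := Primrec.snd.comp Primrec.unpair
  exact Primrec.ite
    (PrimrecPred.and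
      (PrimrecRel.comp Primrec.eq (u1.comp u2) (u1.comp u1))
      (PrimrecRel.comp Primrec.nat_le (u2.comp u2) (u2.comp u1)))
    (Primrec.const 1) (Primrec.const 0)

lemma partrec_of_fun {f : ℕ → ℕ} (hf : Primrec f) :
    Nat.Partrec (fun n => Part.some (f n)) := by
  have := (hf.to_comp).partrec
  exact Partrec.nat_iff.1 this

noncomputable def c1 : Code :=
  (Nat.Partrec.Code.exists_code.1 (partrec_of_fun primrec_f1)).choose

lemma c1_eval : c1.eval = fun n => Part.some (f1 n) :=
  (Nat.Partrec.Code.exists_code.1 (partrec_of_fun primrec_f1)).choose_spec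

noncomputable def c2 : Code :=
  (Nat.Partrec.Code.exists_code.1 (partrec_of_fun primrec_f2)).choose

lemma c2_eval : c2.eval = fun n => Part.some (f2 n) :=
  (Nat.Partrec.Code.exists_code.1 (partrec_of_fun primrec_f2)).choose_spec

/-- The canonical C-index for `col e`. -/
noncomputable def idx1 (e : ℕ) : ℕ := Encodable.encode (c1.curry e)

/-- The canonical C-index for `Dset e s`. -/
noncomputable def idx2 (e s : ℕ) : ℕ := Encodable.encode (c2.curry (Nat.pair e s))

lemma phi_idx1 (e x : ℕ) :
    phi (idx1 e) x = Part.some (if x.unpair.1 = e then 1 else 0) := by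
  rw [idx1, phi_encode, eval_curry, c1_eval]
  simp [f1, Nat.unpair_pair]

lemma phi_idx2 (e s x : ℕ) :
    phi (idx2 e s) x = Part.some (if x.unpair.1 = e ∧ x.unpair.2 ≤ s then 1 else 0) := by
  rw [idx2, phi_encode, eval_curry, c2_eval]
  simp [f2, Nat.unpair_pair]

lemma cindex_idx1 (e : ℕ) : CIndex (idx1 e) := by
  intro x; rw [phi_idx1]; by_cases h : x.unpair.1 = e <;> simp [h]

lemma cindex_idx2 (e s : ℕ) : CIndex (idx2 e s) := by
  intro x; rw [phi_idx2]
  by_cases h : x.unpair.1 = e ∧ x.unpair.2 ≤ s <;> simp [h]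

lemma cset_idx1 (e : ℕ) : Cset (idx1 e) = col e := by
  ext x
  simp only [Cset, Set.mem_setOf_eq, phi_idx1, col]
  by_cases h : x.unpair.1 = e <;> simp [h]

lemma cset_idx2 (e s : ℕ) : Cset (idx2 e s) = ↑(Dset e s) := by
  ext x
  simp only [Cset, Set.mem_setOf_eq, phi_idx2, Finset.coe_sort_coe, Finset.mem_coe, mem_Dset]
  by_cases h : x.unpair.1 = e ∧ x.unpair.2 ≤ s <;> simp [h]

end Separation

section Learner

open Nat.Partrec (Code)
open Nat.Partrec.Code

/-- Inner search predicate: `y` is discovered (within `i` steps) to lie in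
`W_p ∖ Dset e s`. -/
def inq (e s i p : ℕ) (y : ℕ) : Bool :=
  decide ((Nat.Partrec.Code.evaln i (Denumerable.ofNat Code p) y).isSome = true ∧
    ¬(y.unpair.1 = e ∧ y.unpair.2 ≤ s))

/-- Bounded (by `i` computation steps) decidable approximation of `Gpred e s`. -/
def evid (e s i : ℕ) : Bool :=
  Option.casesOn
    (Nat.Partrec.Code.evaln i (Denumerable.ofNat Code e) (Encodable.encode (dlist e s)))
    false
    fun p => decide ((List.range i).findIdx (inq e s i p) < i)

/-- The learner's guess for column `e` with time budget `i`. -/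
noncomputable def guess (e i : ℕ) : ℕ :=
  if (List.range (i + 1)).findIdx (fun s => evid e s i) ≤ i
  then idx2 e ((List.range (i + 1)).findIdx fun s => evid e s i)
  else idx1 e

/-- The partially set-driven learner (as a total function). -/
noncomputable def F (n : ℕ) : ℕ :=
  guess (((Encodable.decode (α := List ℕ) n.unpair.1).getD []).headI.unpair.1) n.unpair.2

noncomputable def learner : Learner := fun n => Part.some (F n)

lemma evid_sound {e s i : ℕ} (h : evid e s i = true) : Gpred e s := by
  unfold evid at h
  rcases ho : Nat.Partrec.Code.evaln i (Denumerable.ofNat Code e)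
      (Encodable.encode (dlist e s)) with _ | p
  · rw [ho] at h; exact absurd h (by simp)
  rw [ho] at h
  simp only [decide_eq_true_eq] at h
  have hlt : (List.range i).findIdx (inq e s i p) < (List.range i).length := by
    simpa using h
  have hy := List.findIdx_getElem (w := hlt)
  rw [List.getElem_range] at hy
  set j := (List.range i).findIdx (inq e s i p) with hj
  unfold inq at hy
  simp only [decide_eq_true_eq] at hy
  obtain ⟨hdom, hnot⟩ := hy
  refine ⟨p, ?_, j, ?_, ?_⟩
  · rw [setCode_Dset, Part.eq_some_iff]
    exact evaln_sound (ho ▸ Option.mem_def.2 rfl : p ∈ _)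
  · rw [mem_Dset]; exact hnot
  · rcases Option.isSome_iff_exists.1 hdom with ⟨v, hv⟩
    exact (PFun.mem_dom _ _).2 ⟨v, evaln_sound (Option.mem_def.2 hv)⟩

lemma evid_mono {e s i i' : ℕ} (hle : i ≤ i') (h : evid e s i = true) :
    evid e s i' = true := by
  unfold evid at h ⊢
  rcases ho : Nat.Partrec.Code.evaln i (Denumerable.ofNat Code e)
      (Encodable.encode (dlist e s)) with _ | p
  · rw [ho] at h; exact absurd h (by simp)
  rw [ho] at h
  have ho' : Nat.Partrec.Code.evaln i' (Denumerable.ofNat Code e)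
      (Encodable.encode (dlist e s)) = some p :=
    evaln_mono hle (ho ▸ Option.mem_def.2 rfl)
  rw [ho']
  simp only [decide_eq_true_eq] at h ⊢
  have hlt : (List.range i).findIdx (inq e s i p) < (List.range i).length := by simpa using h
  have hy := List.findIdx_getElem (w := hlt)
  rw [List.getElem_range] at hy
  set j := (List.range i).findIdx (inq e s i p) with hj
  unfold inq at hy
  simp only [decide_eq_true_eq] at hy
  obtain ⟨hdom, hnot⟩ := hy
  have hji : j < i := by simpa using hlt
  have hex : ∃ y ∈ List.range i', inq e s i' p y = true := by
    refine ⟨j, List.mem_range.2 (lt_of_lt_of_le hji hle), ?_⟩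
    unfold inq
    simp only [decide_eq_true_eq]
    refine ⟨?_, hnot⟩
    rcases Option.isSome_iff_exists.1 hdom with ⟨v, hv⟩
    exact Option.isSome_iff_exists.2 ⟨v, evaln_mono hle (Option.mem_def.2 hv)⟩
  have := List.findIdx_lt_length_of_exists hex
  simpa using this

lemma evid_complete {e s : ℕ} (h : Gpred e s) : ∃ i, evid e s i = true := by
  obtain ⟨p, hp, y, hyD, hyW⟩ := h
  rw [setCode_Dset, Part.eq_some_iff] at hp
  obtain ⟨k1, hk1⟩ := evaln_complete.1 hp
  obtain ⟨v, hv⟩ := (PFun.mem_dom _ _).1 hyW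
  obtain ⟨k2, hk2⟩ := evaln_complete.1 hv
  refine ⟨max k1 k2 + y + 1, ?_⟩
  unfold evid
  have ho : Nat.Partrec.Code.evaln (max k1 k2 + y + 1) (Denumerable.ofNat Code e)
      (Encodable.encode (dlist e s)) = some p :=
    evaln_mono (by omega) hk1
  rw [ho]
  simp only [decide_eq_true_eq]
  have hex : ∃ z ∈ List.range (max k1 k2 + y + 1), inq e s (max k1 k2 + y + 1) p z = true := by
    refine ⟨y, List.mem_range.2 (by omega), ?_⟩
    unfold inq
    simp only [decide_eq_true_eq]
    constructor
    · exact Option.isSome_iff_exists.2 ⟨v, evaln_mono (by omega) hk2⟩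
    · rw [← mem_Dset]; exact hyD
  have := List.findIdx_lt_length_of_exists hex
  simpa using this

lemma evid_false_of_not {e s : ℕ} (h : ¬ Gpred e s) (i : ℕ) : evid e s i = false := by
  by_contra hc
  exact h (evid_sound (by simpa using hc))

lemma guess_of_not {e : ℕ} (h : ∀ s, ¬ Gpred e s) (i : ℕ) : guess e i = idx1 e := by
  unfold guess
  have hfi : (List.range (i + 1)).findIdx (fun s => evid e s i) = i + 1 := by
    have := List.findIdx_eq_length_of_false
      (p := fun s => evid e s i) (xs := List.range (i + 1))
      (fun x _ => evid_false_of_not (h x) i)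
    simpa using this
  rw [hfi]
  simp

lemma guess_of_found {e : ℕ} (h : ∃ s, Gpred e s) :
    ∃ i₀, ∀ i, i₀ ≤ i → guess e i = idx2 e (sInf {s | Gpred e s}) := by
  set s' := sInf {s | Gpred e s} with hs'
  have hmem : Gpred e s' := Nat.sInf_mem h
  obtain ⟨i1, hi1⟩ := evid_complete hmem
  refine ⟨max i1 s', fun i hi => ?_⟩
  have hs'i : s' ≤ i := le_trans (le_max_right _ _) hi
  have hfi : (List.range (i + 1)).findIdx (fun s => evid e s i) = s' := by
    have hlen : s' < (List.range (i + 1)).length := by simpa using Nat.lt_succ_of_le hs'i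
    rw [List.findIdx_eq hlen]
    constructor
    · rw [List.getElem_range]
      exact evid_mono (le_trans (le_max_left _ _) hi) hi1
    · intro j hj
      rw [List.getElem_range]
      have : ¬ Gpred e j := Nat.notMem_of_lt_sInf (by simpa [hs'] using hj)
      simp [evid_false_of_not this i]
  unfold guess
  rw [hfi, if_pos hs'i]

lemma cindex_F (n : ℕ) : CIndex (F n) := by
  unfold F guess
  split
  · exact cindex_idx2 _ _
  · exact cindex_idx1 _

end Learner

section Computability

open Nat.Partrec (Code)
open Nat.Partrec.Code

private lemma primrec_evid : Primrec fun a : ℕ × ℕ × ℕ => evid a.1 a.2.1 a.2.2 := by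
  have he : Primrec fun a : ℕ × ℕ × ℕ => a.1 := Primrec.fst
  have hs : Primrec fun a : ℕ × ℕ × ℕ => a.2.1 := Primrec.fst.comp Primrec.snd
  have hi : Primrec fun a : ℕ × ℕ × ℕ => a.2.2 := Primrec.snd.comp Primrec.snd
  have hdlist : Primrec fun a : ℕ × ℕ × ℕ => dlist a.1 a.2.1 := by
    have : Primrec fun a : ℕ × ℕ × ℕ => List.range (a.2.1 + 1) :=
      Primrec.list_range.comp (Primrec.succ.comp hs)
    exact Primrec.list_map this (Primrec₂.natPair.comp (he.comp Primrec.fst) Primrec.snd)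
  have hcode : Primrec fun a : ℕ × ℕ × ℕ =>
      Encodable.encode (dlist a.1 a.2.1) := Primrec.encode.comp hdlist
  have ho : Primrec fun a : ℕ × ℕ × ℕ =>
      Nat.Partrec.Code.evaln a.2.2 (Denumerable.ofNat Code a.1)
        (Encodable.encode (dlist a.1 a.2.1)) := by
    have := primrec_evaln.comp
      (Primrec.pair (Primrec.pair hi ((Primrec.ofNat Code).comp he)) hcode)
    exact this
  -- the inner predicate, as a function of ((a, p), y)
  have hinq : Primrec₂ fun (ap : (ℕ × ℕ × ℕ) × ℕ) (y : ℕ) =>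
      inq ap.1.1 ap.1.2.1 ap.1.2.2 ap.2 y := by
    have he' : Primrec fun x : ((ℕ × ℕ × ℕ) × ℕ) × ℕ => x.1.1.1 :=
      Primrec.fst.comp (Primrec.fst.comp Primrec.fst)
    have hs' : Primrec fun x : ((ℕ × ℕ × ℕ) × ℕ) × ℕ => x.1.1.2.1 :=
      Primrec.fst.comp (Primrec.snd.comp (Primrec.fst.comp Primrec.fst))
    have hi' : Primrec fun x : ((ℕ × ℕ × ℕ) × ℕ) × ℕ => x.1.1.2.2 :=
      Primrec.snd.comp (Primrec.snd.comp (Primrec.fst.comp Primrec.fst))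
    have hp' : Primrec fun x : ((ℕ × ℕ × ℕ) × ℕ) × ℕ => x.1.2 :=
      Primrec.snd.comp Primrec.fst
    have hy' : Primrec fun x : ((ℕ × ℕ × ℕ) × ℕ) × ℕ => x.2 := Primrec.snd
    have hyu1 : Primrec fun x : ((ℕ × ℕ × ℕ) × ℕ) × ℕ => x.2.unpair.1 :=
      Primrec.fst.comp (Primrec.unpair.comp hy')
    have hyu2 : Primrec fun x : ((ℕ × ℕ × ℕ) × ℕ) × ℕ => x.2.unpair.2 :=
      Primrec.snd.comp (Primrec.unpair.comp hy')
    have hev2 : Primrec fun x : ((ℕ × ℕ × ℕ) × ℕ) × ℕ =>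
        Nat.Partrec.Code.evaln x.1.1.2.2 (Denumerable.ofNat Code x.1.2) x.2 :=
      primrec_evaln.comp (Primrec.pair (Primrec.pair hi' ((Primrec.ofNat Code).comp hp')) hy')
    have h1 : PrimrecPred fun x : ((ℕ × ℕ × ℕ) × ℕ) × ℕ =>
        (Nat.Partrec.Code.evaln x.1.1.2.2 (Denumerable.ofNat Code x.1.2) x.2).isSome = true :=
      PrimrecRel.comp Primrec.eq (Primrec.option_isSome.comp hev2) (Primrec.const true)
    have h2 : PrimrecPred fun x : ((ℕ × ℕ × ℕ) × ℕ) × ℕ =>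
        ¬(x.2.unpair.1 = x.1.1.1 ∧ x.2.unpair.2 ≤ x.1.1.2.1) :=
      PrimrecPred.not
        (PrimrecPred.and (PrimrecRel.comp Primrec.eq hyu1 he')
          (PrimrecRel.comp Primrec.nat_le hyu2 hs'))
    have := PrimrecPred.and h1 h2
    refine Primrec.of_eq this.decide ?_
    intro ⟨ap, y⟩
    unfold inq
    exact decide_eq_decide.2 Iff.rfl
  have hfind : Primrec₂ fun (a : ℕ × ℕ × ℕ) (p : ℕ) =>
      (List.range a.2.2).findIdx (inq a.1 a.2.1 a.2.2 p) := by
    have hr : Primrec fun ap : (ℕ × ℕ × ℕ) × ℕ => List.range ap.1.2.2 :=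
      Primrec.list_range.comp (Primrec.snd.comp (Primrec.snd.comp Primrec.fst))
    exact Primrec.list_findIdx hr hinq
  have hg : Primrec₂ fun (a : ℕ × ℕ × ℕ) (p : ℕ) =>
      decide ((List.range a.2.2).findIdx (inq a.1 a.2.1 a.2.2 p) < a.2.2) :=
    PrimrecPred.decide (PrimrecRel.comp Primrec.nat_lt hfind (hi.comp Primrec.fst))
  exact (Primrec.option_casesOn ho (Primrec.const false) hg).of_eq fun a => rfl

private lemma primrec_guess : Primrec₂ guess := by
  have he : Primrec fun a : ℕ × ℕ => a.1 := Primrec.fst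
  have hi : Primrec fun a : ℕ × ℕ => a.2 := Primrec.snd
  have hj : Primrec fun a : ℕ × ℕ =>
      (List.range (a.2 + 1)).findIdx fun s => evid a.1 s a.2 := by
    have hr : Primrec fun a : ℕ × ℕ => List.range (a.2 + 1) :=
      Primrec.list_range.comp (Primrec.succ.comp hi)
    refine Primrec.list_findIdx hr ?_
    have : Primrec fun x : (ℕ × ℕ) × ℕ => evid x.1.1 x.2 x.1.2 :=
      primrec_evid.comp (Primrec.pair (Primrec.fst.comp Primrec.fst)
        (Primrec.pair Primrec.snd (Primrec.snd.comp Primrec.fst)))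
    exact this
  have hidx2 : Primrec fun a : ℕ × ℕ =>
      idx2 a.1 ((List.range (a.2 + 1)).findIdx fun s => evid a.1 s a.2) := by
    have : Primrec fun a : ℕ × ℕ =>
        (c2.curry (Nat.pair a.1 ((List.range (a.2 + 1)).findIdx fun s => evid a.1 s a.2))) :=
      primrec₂_curry.comp (Primrec.const c2) (Primrec₂.natPair.comp he hj)
    exact Primrec.encode.comp this
  have hidx1 : Primrec fun a : ℕ × ℕ => idx1 a.1 :=
    Primrec.encode.comp (primrec₂_curry.comp (Primrec.const c1) he)
  have hcond : PrimrecPred fun a : ℕ × ℕ =>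
      ((List.range (a.2 + 1)).findIdx fun s => evid a.1 s a.2) ≤ a.2 :=
    PrimrecRel.comp Primrec.nat_le hj hi
  exact (Primrec.ite hcond hidx2 hidx1).of_eq fun a => rfl

private lemma primrec_F : Primrec F := by
  have hu1 : Primrec fun n : ℕ => n.unpair.1 := Primrec.fst.comp Primrec.unpair
  have hu2 : Primrec fun n : ℕ => n.unpair.2 := Primrec.snd.comp Primrec.unpair
  have hdec : Primrec fun n : ℕ => (Encodable.decode (α := List ℕ) n.unpair.1) :=
    Primrec.decode.comp hu1
  have hlist : Primrec fun n : ℕ => (Encodable.decode (α := List ℕ) n.unpair.1).getD [] :=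
    Primrec.option_getD.comp hdec (Primrec.const [])
  have hhead : Primrec fun n : ℕ =>
      ((Encodable.decode (α := List ℕ) n.unpair.1).getD []).headI :=
    Primrec.list_headI.comp hlist
  have he : Primrec fun n : ℕ =>
      ((Encodable.decode (α := List ℕ) n.unpair.1).getD []).headI.unpair.1 :=
    Primrec.fst.comp (Primrec.unpair.comp hhead)
  exact primrec_guess.comp he hu2

lemma partrec_learner : Nat.Partrec learner := partrec_of_fun primrec_F

end Computability

section MainSep

open Nat.Partrec (Code)
open Nat.Partrec.Code

lemma mem_fincontent {T : Text} {n x : ℕ} :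
    x ∈ fincontent T n ↔ ∃ k < n, T k = some x := by
  simp only [fincontent, initSeg, List.mem_toFinset, List.mem_filterMap, List.mem_map,
    List.mem_range, id]
  constructor
  · rintro ⟨o, ⟨k, hk, rfl⟩, ho⟩
    exact ⟨k, hk, ho⟩
  · rintro ⟨k, hk, hx⟩
    exact ⟨T k, ⟨k, hk, rfl⟩, hx⟩

lemma fincontent_subset {T : Text} {n : ℕ} : ↑(fincontent T n) ⊆ content T := by
  intro x hx
  obtain ⟨k, _, hk⟩ := mem_fincontent.1 (by exact_mod_cast hx)
  exact ⟨k, hk⟩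

lemma fincontent_stab {T : Text} {D : Finset ℕ} (h : content T = ↑D) :
    ∃ n₀, ∀ n, n₀ ≤ n → fincontent T n = D := by
  classical
  have hex : ∀ d : ℕ, ∃ k, d ∈ D → T k = some d := by
    intro d
    by_cases hd : d ∈ D
    · have hdc : d ∈ content T := by rw [h]; exact_mod_cast hd
      obtain ⟨k, hk⟩ := hdc
      exact ⟨k, fun _ => hk⟩
    · exact ⟨0, fun hc => absurd hc hd⟩
  choose f hf using hex
  refine ⟨D.sup fun d => f d + 1, fun n hn => ?_⟩
  apply Finset.Subset.antisymm
  · intro x hx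
    have : x ∈ content T := fincontent_subset (by exact_mod_cast hx)
    rw [h] at this
    exact_mod_cast this
  · intro d hd
    have hk : f d + 1 ≤ n := le_trans (Finset.le_sup (f := fun d => f d + 1) hd) hn
    exact mem_fincontent.2 ⟨f d, by omega, hf d hd⟩

lemma headI_sort_mem {D : Finset ℕ} (h : D.Nonempty) : (D.sort (· ≤ ·)).headI ∈ D := by
  have hne : D.sort (· ≤ ·) ≠ [] := by
    intro hc
    have hcard := Finset.length_sort (s := D) (· ≤ ·)
    rw [hc] at hcard
    simp only [List.length_nil] at hcard
    exact h.ne_empty (Finset.card_eq_zero.1 hcard.symm)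
  have hgen : ∀ l : List ℕ, l ≠ [] → l.headI ∈ l := by
    intro l hl
    cases l with
    | nil => exact absurd rfl hl
    | cons a t => exact List.mem_cons_self
  have hmem : (D.sort (· ≤ ·)).headI ∈ D.sort (· ≤ ·) := hgen _ hne
  exact (Finset.mem_sort (· ≤ ·)).1 hmem

lemma F_eval {D : Finset ℕ} (hD : D.Nonempty) {e : ℕ}
    (hsub : ∀ x ∈ D, x.unpair.1 = e) (i : ℕ) :
    F (Nat.pair (setCode D) i) = guess e i := by
  unfold F
  rw [Nat.unpair_pair]
  simp only [setCode, Encodable.encodek, Option.getD_some]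
  rw [hsub _ (headI_sort_mem hD)]

lemma psdop_learner (T : Text) (i : ℕ) :
    Psdop learner T i = Part.some (F (Nat.pair (setCode (fincontent T i)) i)) := rfl

lemma onAllTexts_learner : OnAllTexts Psdop CIndRes learner := by
  intro T i e' h
  rw [psdop_learner] at h
  rw [← Part.some_inj.1 h]
  exact cindex_F _

lemma learns_LL : ∀ L ∈ LL, Learns Psdop ExC learner L := by
  rintro L ⟨e, hL | hL⟩ <;> obtain ⟨hG, rfl⟩ := hL <;> intro T hT
  · -- finite case
    set s' := sInf {s | Gpred e s} with hs'
    obtain ⟨n₁, h₁⟩ := fincontent_stab hT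
    obtain ⟨i₀, h₀⟩ := guess_of_found hG
    have hclaim : ∀ n, max n₁ i₀ ≤ n → Psdop learner T n = Part.some (idx2 e s') := by
      intro n hn
      rw [psdop_learner, h₁ n (le_trans (le_max_left _ _) hn)]
      rw [F_eval (Dset_nonempty e s') (fun x hx => (mem_Dset.1 hx).1)]
      rw [h₀ n (le_trans (le_max_right _ _) hn)]
    refine ⟨max n₁ i₀, fun n hn => ?_, idx2 e s', hclaim _ le_rfl, cindex_idx2 _ _, ?_⟩
    · rw [hclaim n hn, hclaim _ le_rfl]
    · rw [cset_idx2, hT]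
  · -- infinite case
    have hmem : Nat.pair e 0 ∈ content T := by
      rw [hT]; simp [col, Nat.unpair_pair]
    obtain ⟨k, hk⟩ := hmem
    have hclaim : ∀ n, k + 1 ≤ n → Psdop learner T n = Part.some (idx1 e) := by
      intro n hn
      rw [psdop_learner]
      have hne : (fincontent T n).Nonempty :=
        ⟨Nat.pair e 0, mem_fincontent.2 ⟨k, by omega, hk⟩⟩
      have hsub : ∀ x ∈ fincontent T n, x.unpair.1 = e := by
        intro x hx
        have : x ∈ content T := fincontent_subset (by exact_mod_cast hx)
        rw [hT] at this
        exact this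
      rw [F_eval hne hsub, guess_of_not hG]
    refine ⟨k + 1, fun n hn => ?_, idx1 e, hclaim _ le_rfl, cindex_idx1 _, ?_⟩
    · rw [hclaim n hn, hclaim _ le_rfl]
    · rw [cset_idx1, hT]

lemma isRecClass_LL : IsRecClass LL := by
  rintro L ⟨e, hL | hL⟩ <;> obtain ⟨hG, rfl⟩ := hL
  · set s' := sInf {s | Gpred e s}
    have hp : PrimrecPred fun x : ℕ => x.unpair.1 = e ∧ x.unpair.2 ≤ s' :=
      PrimrecPred.and
        (PrimrecRel.comp Primrec.eq (Primrec.fst.comp Primrec.unpair) (Primrec.const e))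
        (PrimrecRel.comp Primrec.nat_le (Primrec.snd.comp Primrec.unpair) (Primrec.const s'))
    refine ⟨fun x => decide (x.unpair.1 = e ∧ x.unpair.2 ≤ s'), hp.decide.to_comp, fun x => ?_⟩
    rw [show (x ∈ (↑(Dset e s') : Set ℕ)) ↔ x ∈ Dset e s' from Iff.rfl.trans Finset.mem_coe,
      mem_Dset]
    simp
  · have hp : PrimrecPred fun x : ℕ => x.unpair.1 = e :=
      PrimrecRel.comp Primrec.eq (Primrec.fst.comp Primrec.unpair) (Primrec.const e)
    refine ⟨fun x => decide (x.unpair.1 = e), hp.decide.to_comp, fun x => ?_⟩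
    simp [col]

lemma LL_not_SdBcW : LL ∉ LearnableREC PartComputable Sdop BcW := by
  rintro ⟨-, h, hpc, hl⟩
  obtain ⟨c, hc⟩ := Nat.Partrec.Code.exists_code.1 hpc
  set e := Encodable.encode c with he
  have hphi : phi e = h := by rw [he, phi_encode, hc]
  by_cases hG : ∃ s, Gpred e s
  · -- finite diagonal language
    set s' := sInf {s | Gpred e s} with hs'
    have hmem : Gpred e s' := Nat.sInf_mem hG
    set T : Text := fun n => some (Nat.pair e (min n s')) with hTdef
    have hcontent : content T = ↑(Dset e s') := by
      ext x
      constructor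
      · rintro ⟨n, hn⟩
        rw [hTdef] at hn
        have : Nat.pair e (min n s') = x := by simpa using hn
        rw [← this]
        exact_mod_cast pair_mem_Dset.2 (min_le_right _ _)
      · intro hx
        have hx' := mem_Dset.1 (by exact_mod_cast hx)
        refine ⟨x.unpair.2, ?_⟩
        show some (Nat.pair e (min x.unpair.2 s')) = some x
        rw [min_eq_left hx'.2, ← hx'.1, Nat.pair_unpair]
    have hfin : ∀ n, s' + 1 ≤ n → fincontent T n = Dset e s' := by
      intro n hn
      ext x
      rw [mem_fincontent]
      constructor
      · rintro ⟨k, _, hk⟩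
        rw [hTdef] at hk
        have : Nat.pair e (min k s') = x := by simpa using hk
        rw [← this]
        exact pair_mem_Dset.2 (min_le_right _ _)
      · intro hx
        have hx' := mem_Dset.1 hx
        refine ⟨x.unpair.2, by omega, ?_⟩
        show some (Nat.pair e (min x.unpair.2 s')) = some x
        rw [min_eq_left hx'.2, ← hx'.1, Nat.pair_unpair]
    have hBc : BcW (Sdop h T) T :=
      hl (↑(Dset e s')) ⟨e, Or.inl ⟨hG, rfl⟩⟩ T hcontent
    obtain ⟨n₀, hb⟩ := hBc
    obtain ⟨q, hq, hWq⟩ := hb (max n₀ (s' + 1)) (le_max_left _ _)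
    have hsd : Sdop h T (max n₀ (s' + 1)) = h (setCode (Dset e s')) := by
      unfold Sdop
      rw [hfin _ (le_max_right _ _)]
    obtain ⟨p, hp, y, hyD, hyW⟩ := hmem
    rw [hphi] at hp
    rw [hsd, hp] at hq
    have hpq : p = q := Part.some_inj.1 hq
    rw [hpq] at hyW
    rw [hWq, hcontent] at hyW
    exact hyD (by exact_mod_cast hyW)
  · have hG' : ∀ s, ¬ Gpred e s := by push_neg at hG; exact hG
    set T : Text := fun n => some (Nat.pair e n) with hTdef
    have hcontent : content T = col e := by
      ext x
      constructor
      · rintro ⟨n, hn⟩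
        rw [hTdef] at hn
        have : Nat.pair e n = x := by simpa using hn
        rw [← this]
        simp [col, Nat.unpair_pair]
      · intro hx
        refine ⟨x.unpair.2, ?_⟩
        have hx1 : x.unpair.1 = e := hx
        show some (Nat.pair e x.unpair.2) = some x
        rw [← hx1, Nat.pair_unpair]
    have hfin : ∀ n, fincontent T (n + 1) = Dset e n := by
      intro n
      ext x
      rw [mem_fincontent, mem_Dset]
      constructor
      · rintro ⟨k, hk, hkx⟩
        rw [hTdef] at hkx
        have : Nat.pair e k = x := by simpa using hkx
        rw [← this]
        simp [Nat.unpair_pair]; omega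
      · rintro ⟨h1, h2⟩
        refine ⟨x.unpair.2, by omega, ?_⟩
        show some (Nat.pair e x.unpair.2) = some x
        rw [← h1, Nat.pair_unpair]
    have hBc : BcW (Sdop h T) T :=
      hl (col e) ⟨e, Or.inr ⟨hG', rfl⟩⟩ T hcontent
    obtain ⟨n₀, hb⟩ := hBc
    obtain ⟨q, hq, hWq⟩ := hb (n₀ + 1) (Nat.le_succ _)
    have hsd : Sdop h T (n₀ + 1) = h (setCode (Dset e n₀)) := by
      unfold Sdop
      rw [hfin n₀]
    rw [hsd] at hq
    refine hG' n₀ ⟨q, ?_, Nat.pair e (n₀ + 1), ?_, ?_⟩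
    · rw [hphi]; exact hq
    · intro hc
      have := pair_mem_Dset.1 hc
      omega
    · rw [hWq, hcontent]
      simp [col, Nat.unpair_pair]

end MainSep

/-- There is a class of recursive languages in `[τ(CInd)TxtPsdEx_C]_REC` but
not in `[TxtSdBc_W]_REC`. -/
theorem tau_cind_psd_not_sd_bcW :
    ∃ ℒ : Set (Set ℕ),
      ℒ ∈ TauLearnableREC PartComputable CIndRes Psdop ExC ∧
      ℒ ∉ LearnableREC PartComputable Sdop BcW := by
  exact ⟨LL, ⟨isRecClass_LL, learner, partrec_learner, onAllTexts_learner, learns_LL⟩,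
    LL_not_SdBcW⟩

end InductiveInference
end

section
/- [TxtItBc_C]_REC = [TxtGBc_C]_REC; that is, a class of recursive languages is Bc_C-learnable by a partial computable iterative learner if and only if it is Bc_C-learnable by a partial computable Gold-style (full-information) learner. -/
namespace InductiveInference

section Aux
open Nat.Partrec (Code)
open Nat.Partrec.Code

lemma initSeg_succ (T : Text) (i : ℕ) : initSeg T (i+1) = initSeg T i ++ [T i] := by
  simp [initSeg, List.range_succ]

lemma initSeg_length (T : Text) (i : ℕ) : (initSeg T i).length = i := by simp [initSeg]

lemma initSeg_take (T : Text) {m i : ℕ} (h : m ≤ i) : (initSeg T i).take m = initSeg T m := by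
  simp [initSeg, ← List.map_take, List.take_range, Nat.min_eq_left h]

/-- universal-with-padding function -/
def univ2 : ℕ →. ℕ := fun z => phi z.unpair.1.unpair.1 z.unpair.2

lemma univ2_partrec : Nat.Partrec univ2 := by
  rw [← Partrec.nat_iff]
  have h1 : Computable fun z : ℕ => Denumerable.ofNat Code z.unpair.1.unpair.1 :=
    (Computable.ofNat Code).comp
      ((Primrec.fst.comp (Primrec.unpair.comp (Primrec.fst.comp Primrec.unpair))).to_comp)
  have h2 : Computable fun z : ℕ => z.unpair.2 :=
    (Primrec.snd.comp Primrec.unpair).to_comp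
  exact Nat.Partrec.Code.eval_part.comp h1 h2

noncomputable def Ucode : Code := (Nat.Partrec.Code.exists_code.mp univ2_partrec).choose

lemma Ucode_eval : Ucode.eval = univ2 :=
  (Nat.Partrec.Code.exists_code.mp univ2_partrec).choose_spec

noncomputable def pad (n : ℕ) : ℕ := Encodable.encode (curry Ucode n)

lemma phi_pad (e d x : ℕ) : phi (pad (Nat.pair e d)) x = phi e x := by
  show (Denumerable.ofNat Code (Encodable.encode (curry Ucode (Nat.pair e d)))).eval x = _
  rw [Denumerable.ofNat_encode, eval_curry, Ucode_eval]
  simp [univ2, phi]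

lemma pad_primrec : Primrec pad :=
  Primrec.encode.comp (primrec₂_curry.comp (Primrec.const Ucode) Primrec.id)

lemma pad_inj : Function.Injective pad := fun a b h =>
  (curry_inj (Encodable.encode_injective h)).2

noncomputable def unpad : ℕ →. ℕ := fun p => Nat.rfind fun n => Part.some (decide (pad n = p))

lemma unpad_pad (n : ℕ) : unpad (pad n) = Part.some n := by
  apply Part.eq_some_iff.mpr
  apply Nat.mem_rfind.mpr
  constructor
  · simp
  · intro m hm
    simp only [Part.mem_some_iff]
    have : pad m ≠ pad n := fun h => absurd (pad_inj h) (Nat.ne_of_lt hm)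
    simp [this]

lemma unpad_partrec : Partrec unpad := by
  apply Partrec.rfind
  have : Computable₂ fun (p n : ℕ) => decide (pad n = p) :=
    (PrimrecPred.decide (Primrec.eq.comp (pad_primrec.comp Primrec.snd) Primrec.fst)).to_comp
  exact this.partrec₂

lemma take_primrec : Primrec₂ (fun (l : List (Option ℕ)) (m : ℕ) => l.take m) := by
  have htl : Primrec (Option.toList : Option (Option ℕ) → List (Option ℕ)) :=
    (Primrec.option_casesOn Primrec.id (Primrec.const [])
      ((Primrec.list_cons.comp Primrec.snd (Primrec.const [])).to₂)).of_eq fun o => by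
        cases o <;> rfl
  have h : Primrec₂ (fun (l : List (Option ℕ)) (m : ℕ) =>
      m.rec (motive := fun _ => List (Option ℕ)) ([] : List (Option ℕ))
        (fun m' ih => ih ++ l[m']?.toList)) :=
    Primrec.nat_rec (Primrec.const [])
      ((Primrec.list_append.comp (Primrec.snd.comp Primrec.snd)
        (htl.comp (Primrec.list_getElem?.comp Primrec.fst (Primrec.fst.comp Primrec.snd)))).to₂)
  refine h.of_eq fun l m => ?_
  induction m with
  | zero => simp
  | succ m ih =>
      have : (m+1).rec (motive := fun _ => List (Option ℕ)) ([] : List (Option ℕ))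
        (fun m' ih => ih ++ l[m']?.toList) =
          (m.rec (motive := fun _ => List (Option ℕ)) ([] : List (Option ℕ))
            (fun m' ih => ih ++ l[m']?.toList)) ++ l[m]?.toList := rfl
      rw [this, ih, List.take_succ]

/-- value from the largest prefix of `σ` converging within `i` steps, stages `0..m`. -/
def bv (cg : Code) (i : ℕ) (σ : List (Option ℕ)) : ℕ → ℕ
  | 0 => (evaln i cg (Encodable.encode (σ.take 0))).getD 0
  | m+1 => (evaln i cg (Encodable.encode (σ.take (m+1)))).getD (bv cg i σ m)

def bestVal (cg : Code) (σ : List (Option ℕ)) : ℕ := bv cg σ.length σ σ.length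

lemma evaln_zero' (c : Code) (n : ℕ) : evaln 0 c n = none :=
  Option.eq_none_iff_forall_not_mem.mpr fun x hx => absurd (evaln_bound hx) (Nat.not_lt_zero n)

lemma bestVal_nil (cg : Code) : bestVal cg [] = 0 := by
  simp [bestVal, bv, evaln_zero']

lemma bestVal_primrec (cg : Code) : Primrec (bestVal cg) := by
  have hev : Primrec₂ fun (σ : List (Option ℕ)) (m : ℕ) =>
      evaln σ.length cg (Encodable.encode (σ.take m)) :=
    (primrec_evaln.comp ((( Primrec.list_length.comp Primrec.fst).pair
        (Primrec.const cg)).pair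
      (Primrec.encode.comp (take_primrec.comp Primrec.fst Primrec.snd))))
  have h : Primrec fun σ : List (Option ℕ) =>
      (σ.length).rec (motive := fun _ => ℕ)
        ((evaln σ.length cg (Encodable.encode (σ.take 0))).getD 0)
        (fun m ih => (evaln σ.length cg (Encodable.encode (σ.take (m+1)))).getD ih) :=
    Primrec.nat_rec' Primrec.list_length
      (Primrec.option_getD.comp (hev.comp Primrec.id (Primrec.const 0)) (Primrec.const 0))
      ((Primrec.option_getD.comp
        (hev.comp Primrec.fst (Primrec.succ.comp (Primrec.fst.comp Primrec.snd)))
        (Primrec.snd.comp Primrec.snd)).to₂)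
  refine h.of_eq fun σ => ?_
  show _ = bv cg σ.length σ σ.length
  have : ∀ n : ℕ, (n.rec (motive := fun _ => ℕ)
        ((evaln σ.length cg (Encodable.encode (σ.take 0))).getD 0)
        (fun m ih => (evaln σ.length cg (Encodable.encode (σ.take (m+1)))).getD ih))
      = bv cg σ.length σ n := by
    intro n
    induction n with
    | zero => rfl
    | succ m ih => show (evaln σ.length cg (Encodable.encode (σ.take (m+1)))).getD _ = _
                   rw [ih]; rfl
  exact this σ.length

lemma bv_spec {cg : Code} {σ : List (Option ℕ)} {n₀ : ℕ}
    (hh : (evaln σ.length cg (Encodable.encode (σ.take n₀))).isSome) :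
    ∀ M, n₀ ≤ M → ∃ m, n₀ ≤ m ∧ m ≤ M ∧
      evaln σ.length cg (Encodable.encode (σ.take m)) = some (bv cg σ.length σ M) := by
  intro M
  induction M with
  | zero =>
      intro h0
      interval_cases n₀
      obtain ⟨v, hv⟩ := Option.isSome_iff_exists.mp hh
      refine ⟨0, le_rfl, le_rfl, ?_⟩
      show _ = some ((evaln σ.length cg (Encodable.encode (σ.take 0))).getD 0)
      rw [hv]
      rfl
  | succ M ih =>
      intro hle
      rcases h : evaln σ.length cg (Encodable.encode (σ.take (M+1))) with _ | v
      · have hne : n₀ ≠ M + 1 := by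
          intro e; rw [e] at hh; rw [h] at hh; simp at hh
        obtain ⟨m, h1, h2, h3⟩ := ih (by omega)
        refine ⟨m, h1, by omega, ?_⟩
        show _ = some ((evaln σ.length cg (Encodable.encode (σ.take (M+1)))).getD _)
        rw [h]; exact h3
      · refine ⟨M+1, hle, le_rfl, ?_⟩
        show _ = some ((evaln σ.length cg (Encodable.encode (σ.take (M+1)))).getD _)
        rw [h]
        rfl

lemma bestVal_spec {cg : Code} {σ : List (Option ℕ)} {n₀ : ℕ} (hn : n₀ ≤ σ.length)
    (hh : (evaln σ.length cg (Encodable.encode (σ.take n₀))).isSome) :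
    ∃ m, n₀ ≤ m ∧ m ≤ σ.length ∧
      evaln σ.length cg (Encodable.encode (σ.take m)) = some (bestVal cg σ) :=
  bv_spec hh σ.length hn

/-- pure iterative fold -/
def ItP (h : Learner) (σ : List (Option ℕ)) : Part ℕ :=
  σ.foldl (fun acc x => acc.bind fun e =>
      h (Encodable.encode (some (e, x) : Option (ℕ × Option ℕ))))
    (h (Encodable.encode (none : Option (ℕ × Option ℕ))))

/-- step-bounded iterative fold -/
def simIt (ch : Code) (k : ℕ) (σ : List (Option ℕ)) : Option ℕ :=
  σ.foldl (fun acc x => acc.bind fun e =>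
      evaln k ch (Encodable.encode (some (e, x) : Option (ℕ × Option ℕ))))
    (evaln k ch (Encodable.encode (none : Option (ℕ × Option ℕ))))

lemma ItP_concat (h : Learner) (σ : List (Option ℕ)) (x : Option ℕ) :
    ItP h (σ ++ [x]) = (ItP h σ).bind fun e =>
      h (Encodable.encode (some (e, x) : Option (ℕ × Option ℕ))) := by
  simp [ItP, List.foldl_append]

lemma simIt_concat (ch : Code) (k : ℕ) (σ : List (Option ℕ)) (x : Option ℕ) :
    simIt ch k (σ ++ [x]) = (simIt ch k σ).bind fun e =>
      evaln k ch (Encodable.encode (some (e, x) : Option (ℕ × Option ℕ))) := by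
  simp [simIt, List.foldl_append]

lemma Itop_eq_ItP (h : Learner) (T : Text) (i : ℕ) : Itop h T i = ItP h (initSeg T i) := by
  induction i with
  | zero => rfl
  | succ i ih => rw [initSeg_succ, ItP_concat, ← ih]; rfl

lemma simIt_mono (ch : Code) {k k' : ℕ} (hk : k ≤ k') {σ : List (Option ℕ)} {e : ℕ}
    (h : simIt ch k σ = some e) : simIt ch k' σ = some e := by
  induction σ using List.reverseRecOn generalizing e with
  | nil => exact evaln_mono hk h
  | append_singleton σ x ih =>
      rw [simIt_concat] at h ⊢
      obtain ⟨e', he', hee⟩ := Option.bind_eq_some_iff.mp h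
      rw [ih he']
      exact evaln_mono hk hee

lemma simIt_complete {h : Learner} {ch : Code} (hch : ch.eval = h)
    {σ : List (Option ℕ)} {e : ℕ} :
    e ∈ ItP h σ ↔ ∃ k, simIt ch k σ = some e := by
  induction σ using List.reverseRecOn generalizing e with
  | nil =>
      show e ∈ h _ ↔ ∃ k, evaln k ch _ = some e
      rw [← hch]
      exact evaln_complete
  | append_singleton σ x ih =>
      rw [ItP_concat]
      constructor
      · intro he
        obtain ⟨e', he', hee⟩ := Part.mem_bind_iff.mp he
        obtain ⟨k₁, hk₁⟩ := ih.mp he'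
        rw [← hch] at hee
        obtain ⟨k₂, hk₂⟩ := evaln_complete.mp hee
        refine ⟨max k₁ k₂, ?_⟩
        rw [simIt_concat, simIt_mono ch (le_max_left k₁ k₂) hk₁]
        exact evaln_mono (le_max_right k₁ k₂) hk₂
      · rintro ⟨k, hk⟩
        rw [simIt_concat] at hk
        obtain ⟨e', he', hee⟩ := Option.bind_eq_some_iff.mp hk
        refine Part.mem_bind_iff.mpr ⟨e', ih.mpr ⟨k, he'⟩, ?_⟩
        rw [← hch]
        exact evaln_sound hee

/-- the Gold-style simulator of an iterative learner -/
def gsim (ch : Code) : ℕ →. ℕ := fun z =>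
  (Part.ofOption (Encodable.decode (α := List (Option ℕ)) z)).bind fun σ =>
    (Nat.rfind fun k => Part.some ((simIt ch k σ).isSome)).bind fun k =>
      Part.ofOption (simIt ch k σ)

lemma simIt_computable (ch : Code) : Computable₂ fun (k : ℕ) (σ : List (Option ℕ)) => simIt ch k σ := by
  have hstep : Primrec₂ fun (a : ℕ × List (Option ℕ)) (sb : Option ℕ × Option ℕ) =>
      sb.1.bind fun e => evaln a.1 ch
        (Encodable.encode (some (e, sb.2) : Option (ℕ × Option ℕ))) :=
    (Primrec.option_bind (Primrec.fst.comp Primrec.snd)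
      ((primrec_evaln.comp ((((Primrec.fst.comp (Primrec.fst.comp Primrec.fst)).pair (Primrec.const ch))).pair
        (Primrec.encode.comp (Primrec.option_some.comp
          (Primrec.snd.pair (Primrec.snd.comp (Primrec.snd.comp Primrec.fst))))))).to₂)).to₂
  have hg : Primrec fun a : ℕ × List (Option ℕ) =>
      evaln a.1 ch (Encodable.encode (none : Option (ℕ × Option ℕ))) :=
    primrec_evaln.comp ((Primrec.fst.pair (Primrec.const ch)).pair
      (Primrec.const (Encodable.encode (none : Option (ℕ × Option ℕ)))))
  exact (Primrec.list_foldl Primrec.snd hg hstep).to_comp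

lemma gsim_partrec (ch : Code) : Partrec (gsim ch) := by
  have hsim := simIt_computable ch
  have hp : Partrec₂ fun (p : ℕ × List (Option ℕ)) (k : ℕ) =>
      (Part.some ((simIt ch k p.2).isSome) : Part Bool) := by
    have : Computable₂ fun (p : ℕ × List (Option ℕ)) (k : ℕ) => (simIt ch k p.2).isSome :=
      (Primrec.option_isSome.to_comp.comp
        (hsim.comp Computable.snd (Computable.snd.comp Computable.fst))).to₂
    exact this.partrec₂
  have hq : Partrec₂ fun (p : (ℕ × List (Option ℕ))) (k : ℕ) =>
      Part.ofOption (simIt ch k p.2) := by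
    have : Computable₂ fun (p : ℕ × List (Option ℕ)) (k : ℕ) => simIt ch k p.2 :=
      (hsim.comp Computable.snd (Computable.snd.comp Computable.fst)).to₂
    exact Computable.ofOption this
  have hinner : Partrec₂ fun (z : ℕ) (σ : List (Option ℕ)) =>
      (Nat.rfind fun k => Part.some ((simIt ch k σ).isSome)).bind fun k =>
        Part.ofOption (simIt ch k σ) :=
    (Partrec.rfind hp).bind hq
  exact (Computable.ofOption Computable.decode).bind hinner

lemma gsim_correct {h : Learner} {ch : Code} (hch : ch.eval = h)
    {σ : List (Option ℕ)} {e : ℕ} (he : e ∈ ItP h σ) :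
    gsim ch (Encodable.encode σ) = Part.some e := by
  rw [Part.eq_some_iff]
  refine Part.mem_bind_iff.mpr ⟨σ, ?_, ?_⟩
  · rw [Encodable.encodek]; exact Part.mem_ofOption.mpr rfl
  · obtain ⟨k, hk⟩ := (simIt_complete hch).mp he
    have hdom : (Nat.rfind fun k => Part.some ((simIt ch k σ).isSome)).Dom := by
      apply Nat.rfind_dom.mpr
      exact ⟨k, by rw [hk]; exact Part.mem_some_iff.mpr rfl, fun _ => trivial⟩
    set k' := (Nat.rfind fun k => Part.some ((simIt ch k σ).isSome)).get hdom with hk'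
    have hmem : k' ∈ Nat.rfind fun k => Part.some ((simIt ch k σ).isSome) := Part.get_mem hdom
    have hsome : (simIt ch k' σ).isSome := by
      have := Nat.rfind_spec hmem
      simpa using this
    obtain ⟨e'', he''⟩ := Option.isSome_iff_exists.mp hsome
    have : e'' ∈ ItP h σ := (simIt_complete hch).mpr ⟨k', he''⟩
    have hee : e'' = e := Part.mem_unique this he
    refine Part.mem_bind_iff.mpr ⟨k', hmem, ?_⟩
    rw [he'', hee]
    exact Part.mem_ofOption.mpr rfl

-- the iterative simulator of a Gold-style learner
noncomputable def itF (cg : Code) (n : ℕ) (x : Option ℕ) : ℕ :=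
  Option.casesOn (Encodable.decode (α := List (Option ℕ)) n.unpair.2) 0
    fun σ => pad (Nat.pair (bestVal cg (σ ++ [x])) (Encodable.encode (σ ++ [x])))

noncomputable def c0 : ℕ := pad (Nat.pair 0 (Encodable.encode ([] : List (Option ℕ))))

noncomputable def itH (cg : Code) : ℕ →. ℕ := fun z =>
  (Part.ofOption (Encodable.decode (α := Option (ℕ × Option ℕ)) z)).bind fun o =>
    Option.casesOn o (Part.some c0) fun q => (unpad q.1).map fun n => itF cg n q.2

lemma itF_computable (cg : Code) : Computable₂ (itF cg) := by
  have hcat : Primrec₂ fun (p : ℕ × Option ℕ) (σ : List (Option ℕ)) => σ ++ [p.2] :=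
    (Primrec.list_concat.comp Primrec.snd (Primrec.snd.comp Primrec.fst)).to₂
  have : Primrec₂ (itF cg) :=
    Primrec.option_casesOn
      (Primrec.decode.comp (Primrec.snd.comp (Primrec.unpair.comp Primrec.fst)))
      (Primrec.const 0)
      ((pad_primrec.comp (Primrec₂.natPair.comp
        ((bestVal_primrec cg).comp (hcat.comp Primrec.fst Primrec.snd))
        (Primrec.encode.comp (hcat.comp Primrec.fst Primrec.snd)))).to₂)
  exact this.to_comp

lemma itH_partrec (cg : Code) : Partrec (itH cg) := by
  have hg : Partrec₂ fun (a : ℕ × Option (ℕ × Option ℕ)) (q : ℕ × Option ℕ) =>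
      (unpad q.1).map fun n => itF cg n q.2 := by
    refine Partrec.map (unpad_partrec.comp (Computable.fst.comp Computable.snd)) ?_
    exact ((itF_computable cg).comp Computable.snd
      (Computable.snd.comp (Computable.snd.comp Computable.fst))).to₂
  have hinner : Partrec₂ fun (z : ℕ) (o : Option (ℕ × Option ℕ)) =>
      Option.casesOn o (Part.some c0) fun q => (unpad q.1).map fun n => itF cg n q.2 :=
    Partrec.optionCasesOn_right Computable.snd (Computable.const c0) hg
  exact (Computable.ofOption Computable.decode).bind hinner

lemma itH_invariant (cg : Code) (T : Text) (i : ℕ) : Itop (itH cg) T i =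
    Part.some (pad (Nat.pair (bestVal cg (initSeg T i)) (Encodable.encode (initSeg T i)))) := by
  induction i with
  | zero =>
      show itH cg (Encodable.encode (none : Option (ℕ × Option ℕ))) = _
      rw [itH, Encodable.encodek]
      show ((some (none : Option (ℕ × Option ℕ)) : Part (Option (ℕ × Option ℕ))).bind _) = _
      rw [Part.coe_some, Part.bind_some]
      show Part.some c0 = _
      have : initSeg T 0 = [] := rfl
      rw [this, bestVal_nil, c0]
  | succ i ih =>
      show (Itop (itH cg) T i).bind _ = _
      rw [ih, Part.bind_some]
      simp only [itH]
      rw [Encodable.encodek, Part.coe_some, Part.bind_some]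
      show (unpad (pad (Nat.pair (bestVal cg (initSeg T i))
        (Encodable.encode (initSeg T i))))).map _ = _
      rw [unpad_pad, Part.map_some]
      congr 1
      simp only [itF, Nat.unpair_pair, Encodable.encodek]
      rw [← initSeg_succ]

lemma CIndex_pad {e : ℕ} (d : ℕ) (h : CIndex e) : CIndex (pad (Nat.pair e d)) := fun x => by
  rw [phi_pad]; exact h x

lemma Cset_pad (e d : ℕ) : Cset (pad (Nat.pair e d)) = Cset e :=
  Set.ext fun x => by simp [Cset, phi_pad]

end Aux

/-- `[TxtItBc_C]_REC = [TxtGBc_C]_REC`. -/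
theorem it_bcC_eq_g_bcC :
    LearnableREC PartComputable Itop BcC =
      LearnableREC PartComputable Gop BcC := by
  apply Set.Subset.antisymm
  · -- iterative learners can be simulated by Gold-style learners
    rintro ℒ ⟨hrec, h, hpc, hlearn⟩
    obtain ⟨ch, hch⟩ := Nat.Partrec.Code.exists_code.mp hpc
    refine ⟨hrec, gsim ch, Partrec.nat_iff.mp (gsim_partrec ch), fun L hL T hT => ?_⟩
    obtain ⟨n₀, hn₀⟩ := hlearn L hL T hT
    refine ⟨n₀, fun n hn => ?_⟩
    obtain ⟨e, he, hci, hcs⟩ := hn₀ n hn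
    refine ⟨e, ?_, hci, hcs⟩
    have hmem : e ∈ ItP h (initSeg T n) := by
      rw [← Itop_eq_ItP, he]; exact Part.mem_some e
    exact gsim_correct hch hmem
  · -- Gold-style learners can be simulated by iterative learners
    rintro ℒ ⟨hrec, g, hpc, hlearn⟩
    obtain ⟨cg, hcg⟩ := Nat.Partrec.Code.exists_code.mp hpc
    refine ⟨hrec, itH cg, Partrec.nat_iff.mp (itH_partrec cg), fun L hL T hT => ?_⟩
    obtain ⟨n₀, hn₀⟩ := hlearn L hL T hT
    obtain ⟨e₀, he₀, -, -⟩ := hn₀ n₀ le_rfl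
    have hmem₀ : e₀ ∈ cg.eval (Encodable.encode (initSeg T n₀)) := by
      rw [hcg]
      exact Part.eq_some_iff.mp he₀
    obtain ⟨k₀, hk₀⟩ := Nat.Partrec.Code.evaln_complete.mp hmem₀
    refine ⟨max n₀ k₀, fun i hi => ?_⟩
    have h1 : n₀ ≤ i := le_trans (le_max_left _ _) hi
    have h2 : k₀ ≤ i := le_trans (le_max_right _ _) hi
    have hlen : (initSeg T i).length = i := initSeg_length T i
    have hsome : (Nat.Partrec.Code.evaln (initSeg T i).length cg
        (Encodable.encode ((initSeg T i).take n₀))).isSome := by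
      rw [hlen, initSeg_take T h1]
      exact Option.isSome_iff_exists.mpr
        ⟨e₀, Option.mem_def.mp (Nat.Partrec.Code.evaln_mono h2 hk₀)⟩
    obtain ⟨m, hm₁, hm₂, hm₃⟩ :=
      bestVal_spec (le_of_le_of_eq h1 hlen.symm) hsome
    have hv : bestVal cg (initSeg T i) ∈ g (Encodable.encode (initSeg T m)) := by
      rw [← hcg]
      have hmem' := Nat.Partrec.Code.evaln_sound (Option.mem_def.mpr hm₃)
      rwa [initSeg_take T (le_of_le_of_eq hm₂ hlen)] at hmem'
    obtain ⟨em, hem, hci, hcs⟩ := hn₀ m hm₁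
    have heq : bestVal cg (initSeg T i) = em := by
      have h5 : g (Encodable.encode (initSeg T m)) = Part.some em := hem
      rw [h5] at hv; exact Part.mem_some_iff.mp hv
    rw [itH_invariant cg T i]
    refine ⟨_, rfl, CIndex_pad _ ?_, ?_⟩
    · rw [heq]; exact hci
    · rw [Cset_pad, heq, hcs]

end InductiveInference
end

section
/- [TxtTdEx_C]_REC = [TxtTdBc_C]_REC; that is, a class of recursive languages is Ex_C-learnable by a partial computable transductive learner if and only if it is Bc_C-learnable by a partial computable transductive learner. -/
namespace InductiveInference

/-! ### Auxiliary development -/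

open Nat.Partrec (Code)
open Nat.Partrec.Code

/-- Membership of a datum in `L ∪ {#}`. -/
def DIn (L : Set ℕ) : Option ℕ → Prop
  | none => True
  | some y => y ∈ L

theorem exists_text (L : Set ℕ) : ∃ T : Text, content T = L := by
  rcases L.eq_empty_or_nonempty with rfl | hne
  · exact ⟨fun _ => none, by ext x; simp [content]⟩
  · obtain ⟨f, hf⟩ := (Set.to_countable L).exists_eq_range hne
    refine ⟨fun n => some (f n), ?_⟩
    ext x; simp [content, hf, Set.range, eq_comm]

/-- Interleave a text with a constant datum. -/
def interleave (T : Text) (d : Option ℕ) : Text := fun n =>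
  if n % 2 = 0 then T (n / 2) else d

theorem interleave_odd (T : Text) (d : Option ℕ) (i : ℕ) :
    interleave T d (2 * i + 1) = d := by
  simp [interleave, Nat.mul_add_mod]

theorem content_interleave {T : Text} {L : Set ℕ} (hT : content T = L) {d : Option ℕ}
    (hd : DIn L d) : content (interleave T d) = L := by
  ext x
  constructor
  · rintro ⟨n, hn⟩
    unfold interleave at hn
    split at hn
    · exact hT ▸ (⟨n / 2, hn⟩ : x ∈ content T)
    · subst hn; exact hd
  · intro hx
    obtain ⟨n, hn⟩ : x ∈ content T := hT ▸ hx
    exact ⟨2 * n, by simpa [interleave, Nat.mul_div_cancel_left, Nat.mul_mod_right] using hn⟩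

theorem tdop_succ (h : Learner) (T : Text) (i : ℕ) :
    Tdop h T (i + 1) = (h (Encodable.encode (T i))).bind fun v =>
      match v with
      | 0 => Tdop h T i
      | e + 1 => Part.some e := rfl

/-- If the hypothesis sequence is defined at `n`, some earlier datum got a
non-`?` output. -/
theorem tdop_some_exists (h : Learner) (T : Text) :
    ∀ n e, Tdop h T n = Part.some e →
      ∃ m, m + 1 ≤ n ∧ ∃ v, h (Encodable.encode (T m)) = Part.some (v + 1) := by
  intro n
  induction n with
  | zero => intro e he; exact absurd he.symm (Part.some_ne_none e)
  | succ m ih =>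
    intro e he
    rw [tdop_succ] at he
    obtain ⟨v, hv, hev⟩ := Part.mem_bind_iff.1 (Part.eq_some_iff.1 he)
    match v with
    | 0 =>
      obtain ⟨m', hm', hw⟩ := ih e (Part.eq_some_iff.2 hev)
      exact ⟨m', le_trans hm' (Nat.le_succ m), hw⟩
    | w + 1 => exact ⟨m, le_refl _, w, Part.eq_some_iff.2 hv⟩

/-- Main consequence of Bc-learning for a single datum from `L ∪ {#}`. -/
theorem bc_datum {h : Learner} {L : Set ℕ} (HBc : Learns Tdop BcC h L)
    {d : Option ℕ} (hd : DIn L d) :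
    ∃ v, h (Encodable.encode d) = Part.some v ∧
      ∀ w, v = w + 1 → CIndex w ∧ Cset w = L := by
  obtain ⟨T₀, hT₀⟩ := exists_text L
  have hTi : content (interleave T₀ d) = L := content_interleave hT₀ hd
  obtain ⟨n₀, hn⟩ := HBc _ hTi
  obtain ⟨e, he, heC, heS⟩ := hn (2 * n₀ + 1 + 1) (by omega)
  rw [tdop_succ, interleave_odd] at he
  obtain ⟨v, hv, hev⟩ := Part.mem_bind_iff.1 (Part.eq_some_iff.1 he)
  refine ⟨v, Part.eq_some_iff.2 hv, ?_⟩
  rintro w rfl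
  have : e = w := by simpa using (Part.mem_some_iff.1 hev)
  subst this
  exact ⟨heC, hTi ▸ heS⟩

/-- Step-bounded check: returns `k+1` (where `k = n.unpair.2`) if the learner
code `c` halts on input `k` within `n.unpair.1` steps with a non-`?` output,
and `0` otherwise. -/
def scan (c : Code) (n : ℕ) : ℕ :=
  Nat.casesOn ((Code.evaln n.unpair.1 c n.unpair.2).getD 0) 0 (fun _ => n.unpair.2 + 1)

/-- The search predicate used to canonicalize hypotheses: `n = ⟨s, k⟩` is good
if `c` halts on `k` in `s` steps with output `≥ 1` and the datum coded by `k`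
is consistent with the language decided by `e`. -/
def qfun (c : Code) (e : ℕ) (n : ℕ) : Part Bool :=
  Nat.casesOn (scan c n) (Part.some false) fun k =>
    Nat.casesOn k (Part.some true) fun y => (phi e y).map fun r => decide (r = 1)

/-- The canonicalized learner built from the code `c` of a Bc-learner. -/
def gfun (c : Code) (m : ℕ) : Part ℕ :=
  (c.eval m).bind fun v =>
    Nat.casesOn v (Part.some 0) fun w =>
      (Nat.rfind (qfun c w)).bind fun n => c.eval n.unpair.2

/-- The semantic version of the search predicate: it depends only on `c` and
the language `L`. -/
def QL (c : Code) (L : Set ℕ) (n : ℕ) : Prop :=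
  (∃ v, Code.evaln n.unpair.1 c n.unpair.2 = some (v + 1)) ∧
    (n.unpair.2 = 0 ∨ ∃ y, n.unpair.2 = y + 1 ∧ y ∈ L)

theorem scan_pos {c : Code} {n v : ℕ}
    (hv : Code.evaln n.unpair.1 c n.unpair.2 = some (v + 1)) :
    scan c n = n.unpair.2 + 1 := by
  simp [scan, hv]

theorem scan_zero {c : Code} {n : ℕ}
    (hv : ¬∃ v, Code.evaln n.unpair.1 c n.unpair.2 = some (v + 1)) :
    scan c n = 0 := by
  unfold scan
  cases he : Code.evaln n.unpair.1 c n.unpair.2 with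
  | none => simp
  | some u =>
    cases u with
    | zero => simp
    | succ v => exact absurd ⟨v, he⟩ hv

theorem qfun_true {c : Code} {e : ℕ} {L : Set ℕ} (heS : Cset e = L) {n : ℕ}
    (hQ : QL c L n) : qfun c e n = Part.some true := by
  obtain ⟨⟨v, hv⟩, hk⟩ := hQ
  unfold qfun
  rw [scan_pos hv]
  rcases hk with h0 | ⟨y, hy, hyL⟩
  · rw [h0]; rfl
  · rw [hy]
    have : phi e y = Part.some 1 := by rw [← heS] at hyL; exact hyL
    simp [this]

theorem qfun_false {c : Code} {e : ℕ} {L : Set ℕ} (heC : CIndex e) (heS : Cset e = L)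
    {n : ℕ} (hQ : ¬QL c L n) : qfun c e n = Part.some false := by
  by_cases hv : ∃ v, Code.evaln n.unpair.1 c n.unpair.2 = some (v + 1)
  · obtain ⟨v, hv⟩ := hv
    unfold qfun
    rw [scan_pos hv]
    have hk : ¬(n.unpair.2 = 0 ∨ ∃ y, n.unpair.2 = y + 1 ∧ y ∈ L) :=
      fun h => hQ ⟨⟨v, hv⟩, h⟩
    push_neg at hk
    obtain ⟨hk0, hk1⟩ := hk
    obtain ⟨y, hy⟩ := Nat.exists_eq_succ_of_ne_zero hk0
    rw [hy]
    have hyL : y ∉ L := fun hmem => hk1 y (by omega) hmem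
    rcases heC y with h0 | h1
    · simp [h0]
    · exact absurd (heS ▸ (h1 : y ∈ Cset e)) hyL
  · unfold qfun
    rw [scan_zero hv]; rfl

theorem qfun_dom {c : Code} {e : ℕ} {L : Set ℕ} (heC : CIndex e) (heS : Cset e = L)
    {n : ℕ} : (qfun c e n).Dom := by
  by_cases hQ : QL c L n
  · rw [qfun_true heS hQ]; trivial
  · rw [qfun_false heC heS hQ]; trivial

/-- Key lemma: if `h = eval c` Bc-learns `L`, then there is a single index `κ`
(depending only on `c` and `L`) such that on every datum from `L ∪ {#}` on
which `h` outputs a hypothesis, `gfun c` outputs exactly `κ`. -/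
theorem key_lemma {h : Learner} {c : Code} (hc : c.eval = h) {L : Set ℕ}
    (HBc : Learns Tdop BcC h L) :
    ∃ κ, CIndex κ ∧ Cset κ = L ∧
      (∀ d : Option ℕ, DIn L d → ∀ w,
        h (Encodable.encode d) = Part.some (w + 1) →
        gfun c (Encodable.encode d) = Part.some (κ + 1)) := by
  classical
  -- a witness for the search predicate, obtained from some text for `L`
  obtain ⟨T₀, hT₀⟩ := exists_text L
  obtain ⟨n₀, hn⟩ := HBc T₀ hT₀
  obtain ⟨e₀, he₀, -, -⟩ := hn n₀ le_rfl
  obtain ⟨m, -, v, hv⟩ := tdop_some_exists h T₀ n₀ e₀ he₀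
  have HQ : ∃ n, QL c L n := by
    have hmem : (v + 1) ∈ c.eval (Encodable.encode (T₀ m)) := by
      rw [hc, hv]; exact Part.mem_some_iff.2 rfl
    obtain ⟨s, hs⟩ := Nat.Partrec.Code.evaln_complete.1 hmem
    refine ⟨Nat.pair s (Encodable.encode (T₀ m)), ⟨v, ?_⟩, ?_⟩
    · rw [Nat.unpair_pair]; exact Option.mem_def.1 hs
    · rw [Nat.unpair_pair]
      cases hTm : T₀ m with
      | none => left; simp [Encodable.encode_none]
      | some y =>
        right
        refine ⟨y, by simp [Encodable.encode_some, Encodable.encode_nat], ?_⟩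
        rw [← hT₀]; exact ⟨m, hTm⟩
  -- the canonical minimal witness
  set n' := Nat.find HQ with hn'def
  obtain ⟨⟨u, hu⟩, hk⟩ := Nat.find_spec HQ
  have hku : h n'.unpair.2 = Part.some (u + 1) := by
    rw [← hc]; exact Part.eq_some_iff.2 (Nat.Partrec.Code.evaln_sound hu)
  obtain ⟨d', hd'e, hd'L⟩ :
      ∃ d' : Option ℕ, Encodable.encode d' = n'.unpair.2 ∧ DIn L d' := by
    rcases hk with h0 | ⟨y, hy, hyL⟩
    · exact ⟨none, by simp [Encodable.encode_none, hn'def, h0], trivial⟩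
    · exact ⟨some y, by simp [Encodable.encode_some, Encodable.encode_nat, hn'def, hy], hyL⟩
  obtain ⟨v', hv', hprop⟩ := bc_datum HBc hd'L
  have hv'u : v' = u + 1 := by
    rw [hd'e, hku] at hv'
    exact (Part.some_inj.1 hv').symm
  obtain ⟨hCu, hSu⟩ := hprop u hv'u
  refine ⟨u, hCu, hSu, ?_⟩
  intro d hdL w hw
  obtain ⟨v2, hv2, hprop2⟩ := bc_datum HBc hdL
  have hv2w : v2 = w + 1 := Part.some_inj.1 (hv2.symm.trans hw)
  obtain ⟨hCw, hSw⟩ := hprop2 w hv2w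
  have hrfind : Nat.rfind (qfun c w) = Part.some n' := by
    apply Part.eq_some_iff.2
    apply Nat.mem_rfind.2
    constructor
    · rw [qfun_true hSw (Nat.find_spec HQ)]
      exact Part.mem_some_iff.2 rfl
    · intro m' hm'
      rw [qfun_false hCw hSw (Nat.find_min HQ hm')]
      exact Part.mem_some_iff.2 rfl
  unfold gfun
  rw [hc, hw, Part.bind_some]
  show (Nat.rfind (qfun c w)).bind (fun n => h n.unpair.2) = _
  rw [hrfind, Part.bind_some, hku]

theorem gfun_zero {h : Learner} {c : Code} (hc : c.eval = h) {x : ℕ}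
    (hx : h x = Part.some 0) : gfun c x = Part.some 0 := by
  unfold gfun
  rw [hc, hx, Part.bind_some]
  rfl

/-- The constructed learner `gfun c` Ex-learns every language Bc-learned by
`h = eval c`. -/
theorem ex_learn {h : Learner} {c : Code} (hc : c.eval = h) {L : Set ℕ}
    (HBc : Learns Tdop BcC h L) : Learns Tdop ExC (gfun c) L := by
  obtain ⟨κ, hκC, hκS, hg⟩ := key_lemma hc HBc
  intro T hT
  have hdT : ∀ n, DIn L (T n) := by
    intro n
    cases hTn : T n with
    | none => trivial
    | some y => show y ∈ L; rw [← hT]; exact ⟨n, hTn⟩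
  obtain ⟨n₀, hn⟩ := HBc T hT
  obtain ⟨e₀, he₀, -, -⟩ := hn n₀ le_rfl
  obtain ⟨m, -, v, hv⟩ := tdop_some_exists h T n₀ e₀ he₀
  have hstab : ∀ j, Tdop (gfun c) T (m + 1 + j) = Part.some κ := by
    intro j
    induction j with
    | zero =>
      rw [Nat.add_zero, tdop_succ (gfun c) T m, hg (T m) (hdT m) v hv, Part.bind_some]
    | succ j ih =>
      have hidx : m + 1 + (j + 1) = (m + 1 + j) + 1 := rfl
      rw [hidx, tdop_succ (gfun c) T (m + 1 + j)]
      obtain ⟨u, hu, hup⟩ := bc_datum HBc (hdT (m + 1 + j))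
      cases u with
      | zero =>
        rw [gfun_zero hc hu, Part.bind_some]
        exact ih
      | succ w =>
        rw [hg (T (m + 1 + j)) (hdT (m + 1 + j)) w hu, Part.bind_some]
  refine ⟨m + 1, ?_, κ, by simpa using hstab 0, hκC, hκS.trans hT.symm⟩
  intro n hn'
  have h1 := hstab (n - (m + 1))
  rw [Nat.add_sub_cancel' hn'] at h1
  rw [h1]
  simpa using (hstab 0).symm

theorem gfun_partrec (c : Code) : Nat.Partrec (gfun c) := by
  have hscan : Primrec (scan c) := by
    have hev : Primrec fun n : ℕ => Code.evaln n.unpair.1 c n.unpair.2 :=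
      Nat.Partrec.Code.primrec_evaln.comp
        (((Primrec.fst.comp Primrec.unpair).pair (Primrec.const c)).pair
          (Primrec.snd.comp Primrec.unpair))
    exact Primrec.nat_casesOn (Primrec.option_getD.comp hev (Primrec.const 0))
      (Primrec.const 0)
      ((Primrec.succ.comp (Primrec.snd.comp (Primrec.unpair.comp Primrec.fst))).to₂)
  have hphi : Partrec₂ phi := by
    unfold phi
    exact Nat.Partrec.Code.eval_part.comp
      ((Primrec.ofNat Nat.Partrec.Code).to_comp.comp Computable.fst) Computable.snd
  have hinner2 : Partrec fun q : ((ℕ × ℕ) × ℕ) × ℕ =>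
      (phi q.1.1.1 q.2).map fun r => decide (r = 1) := by
    have h1 : Partrec fun q : ((ℕ × ℕ) × ℕ) × ℕ => phi q.1.1.1 q.2 :=
      hphi.comp (Computable.fst.comp (Computable.fst.comp Computable.fst))
        Computable.snd
    exact h1.map ((Primrec.eq.comp Primrec.snd
      (Primrec.const 1)).decide.to_comp.to₂)
  have hinner1 : Partrec fun a : (ℕ × ℕ) × ℕ =>
      Nat.casesOn (motive := fun _ => Part Bool) a.2 (Part.some true)
        (fun y => (phi a.1.1 y).map fun r => decide (r = 1)) := by
    have := Partrec.nat_casesOn_right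
      (f := fun a : (ℕ × ℕ) × ℕ => a.2) (g := fun _ => true)
      (h := fun (a : (ℕ × ℕ) × ℕ) (y : ℕ) => (phi a.1.1 y).map fun r => decide (r = 1))
      Computable.snd (Computable.const true) hinner2.to₂
    exact this.of_eq fun a => rfl
  have hq : Partrec fun p : ℕ × ℕ => qfun c p.1 p.2 := by
    have := Partrec.nat_casesOn_right
      (f := fun p : ℕ × ℕ => scan c p.2) (g := fun _ => false)
      (h := fun (p : ℕ × ℕ) (k : ℕ) => Nat.casesOn (motive := fun _ => Part Bool) k
        (Part.some true) (fun y => (phi p.1 y).map fun r => decide (r = 1)))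
      (hscan.to_comp.comp Computable.snd) (Computable.const false) hinner1.to₂
    exact this.of_eq fun p => rfl
  have hev : Partrec c.eval :=
    Nat.Partrec.Code.eval_part.comp (Computable.const c) Computable.id
  have hrf : Partrec fun a : ℕ × ℕ => Nat.rfind (qfun c a.2) := by
    apply Partrec.rfind (p := fun a : ℕ × ℕ => qfun c a.2)
    exact (hq.comp ((Computable.snd.comp Computable.fst).pair Computable.snd)).to₂
  have hrfbind : Partrec fun a : ℕ × ℕ =>
      (Nat.rfind (qfun c a.2)).bind fun n => c.eval n.unpair.2 := by
    have hev0 : Partrec c.eval :=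
      Nat.Partrec.Code.eval_part.comp (Computable.const c) Computable.id
    exact hrf.bind
      ((hev0.comp ((Primrec.snd.comp Primrec.unpair).to_comp.comp Computable.snd)).to₂)
  have hmain : Partrec (gfun c) := by
    have hinner : Partrec fun p : ℕ × ℕ =>
        Nat.casesOn (motive := fun _ => Part ℕ) p.2 (Part.some 0)
          (fun w => (Nat.rfind (qfun c w)).bind fun n => c.eval n.unpair.2) := by
      have := Partrec.nat_casesOn_right
        (f := fun p : ℕ × ℕ => p.2) (g := fun _ => (0 : ℕ))
        (h := fun (_ : ℕ × ℕ) (w : ℕ) =>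
          (Nat.rfind (qfun c w)).bind fun n => c.eval n.unpair.2)
        Computable.snd (Computable.const 0)
        (hrfbind.comp ((Computable.const 0).pair Computable.snd) : Partrec _).to₂
      exact this.of_eq fun p => rfl
    exact (hev.bind hinner.to₂).of_eq fun m => rfl
  exact Partrec.nat_iff.1 hmain

/-- `[TxtTdEx_C]_REC = [TxtTdBc_C]_REC`. -/
theorem td_exC_eq_td_bcC :
    LearnableREC PartComputable Tdop ExC =
      LearnableREC PartComputable Tdop BcC := by
  ext ℒ
  simp only [LearnableREC, Set.mem_setOf_eq]
  constructor
  · rintro ⟨hrec, h, hpc, hl⟩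
    refine ⟨hrec, h, hpc, fun L hL T hT => ?_⟩
    obtain ⟨n₀, hstab, e, he, hC, hS⟩ := hl L hL T hT
    exact ⟨n₀, fun n hn => ⟨e, (hstab n hn).trans he, hC, hS⟩⟩
  · rintro ⟨hrec, h, hpc, hl⟩
    obtain ⟨c, hc⟩ := Nat.Partrec.Code.exists_code.1 hpc
    exact ⟨hrec, gfun c, gfun_partrec c, fun L hL => ex_learn hc (hl L hL)⟩

end InductiveInference
end
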